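/- Let V be a complete discrete valuation ring with fraction field K and algebraically closed residue field k, and let B be an integral domain that is a finitely generated V-algebra such that the reduction of B ⊗_V k is isomorphic to k (i.e., Spec(B ⊗_V k) is a single reduced point) and B ⊗_V K ≠ 0. Then B ⊗_V K is a finite field extension of K. -/

import Mathlib

open TensorProduct

/-- If `V` is `(π)`-adically complete, `B` a Noetherian domain over `V` with
`B/πB` finite over `V` and `πB ≠ B`, then `B` is a finite `V`-module. -/
theorem aux_finite_of_adicComplete
    (V : Type) [CommRing V] (π : V) [IsAdicComplete (Ideal.span {π} : Ideal V) V]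
    (B : Type) [CommRing B] [IsDomain B] [Algebra V B] [IsNoetherianRing B]
    (hfin : Module.Finite V (B ⧸ (Ideal.span {algebraMap V B π} : Ideal B)))
    (hne : (Ideal.span {algebraMap V B π} : Ideal B) ≠ ⊤) :
    Module.Finite V B := by
  classical
  set πB : B := algebraMap V B π with hπB
  set J : Ideal B := Ideal.span {πB} with hJ
  obtain ⟨s, hs⟩ := hfin.fg_top
  let g : B ⧸ J → B := Function.surjInv Ideal.Quotient.mk_surjective
  have hg : ∀ x, Ideal.Quotient.mk J (g x) = x :=
    fun x => Function.surjInv_eq Ideal.Quotient.mk_surjective x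
  let ι := {x // x ∈ s}
  let v : ι → B := fun i => g i.1
  have hrange : (Set.range fun i : ι => (i : B ⧸ J)) = (s : Set (B ⧸ J)) :=
    Subtype.range_coe
  have step : ∀ c : B, ∃ (w : ι → V) (c' : B),
      c = (∑ i, w i • v i) + πB * c' := by
    intro c
    have hc : Ideal.Quotient.mk J c ∈
        Submodule.span V (Set.range fun i : ι => (i : B ⧸ J)) := by
      rw [hrange, hs]; exact Submodule.mem_top
    rw [Submodule.mem_span_range_iff_exists_fun] at hc
    obtain ⟨w, hw⟩ := hc
    have : Ideal.Quotient.mk J (∑ i, w i • v i) = Ideal.Quotient.mk J c := by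
      have : ∀ i : ι, Ideal.Quotient.mk J (w i • v i) = w i • (i : B ⧸ J) := by
        intro i
        have := map_smul (Ideal.Quotient.mkₐ V J) (w i) (v i)
        simp only [Ideal.Quotient.mkₐ_eq_mk] at this
        rw [this, hg]
      rw [map_sum, Finset.sum_congr rfl (fun i _ => this i), hw]
    have hmem : c - ∑ i, w i • v i ∈ J := by
      rw [← Ideal.Quotient.eq_zero_iff_mem, map_sub, this, sub_self]
    obtain ⟨a, ha⟩ := Ideal.mem_span_singleton'.mp hmem
    exact ⟨w, a, by rw [mul_comm, ha]; ring⟩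
  choose w' c' hstep using step
  have key : ∀ b : B, b ∈ Submodule.span V (Set.range v) := by
    intro b
    let seq : ℕ → (ι → V) × B := fun n =>
      Nat.rec ((0 : ι → V), b)
        (fun n p => (p.1 + fun i => π ^ n * w' p.2 i, c' p.2)) n
    have seq_succ : ∀ n, seq (n + 1) =
        ((seq n).1 + fun i => π ^ n * w' (seq n).2 i, c' (seq n).2) := fun n => rfl
    have smulpow : ∀ (n : ℕ) (a : V) (x : B), πB ^ n * (a • x) = (π ^ n * a) • x := by
      intro n a x
      rw [mul_smul, Algebra.smul_def (π ^ n), map_pow, ← hπB]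
    have inv : ∀ n, b = (∑ i, (seq n).1 i • v i) + πB ^ n * (seq n).2 := by
      intro n
      induction n with
      | zero => simp [seq]
      | succ n ih =>
        rw [seq_succ]
        have hc := hstep (seq n).2
        calc b = (∑ i, (seq n).1 i • v i) + πB ^ n * (seq n).2 := ih
          _ = (∑ i, (seq n).1 i • v i) +
              (πB ^ n * (∑ i, w' (seq n).2 i • v i) + πB ^ n * (πB * c' (seq n).2)) := by
                rw [← mul_add, ← hc]
          _ = (∑ i, (seq n).1 i • v i) +
              ((∑ i, (π ^ n * w' (seq n).2 i) • v i) + πB ^ (n + 1) * c' (seq n).2) := by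
                rw [Finset.mul_sum]
                simp_rw [smulpow]
                ring_nf
          _ = (∑ i, ((seq n).1 i + π ^ n * w' (seq n).2 i) • v i) +
              πB ^ (n + 1) * c' (seq n).2 := by
                simp_rw [add_smul, Finset.sum_add_distrib]
                ring
          _ = _ := by simp
    have hdiff : ∀ (i : ι) (m n : ℕ), m ≤ n →
        (seq n).1 i - (seq m).1 i ∈ (Ideal.span {π} : Ideal V) ^ m := by
      intro i m n h
      induction n, h using Nat.le_induction with
      | base => simp
      | succ n hmn ih =>
        have h1 : (seq (n + 1)).1 i - (seq n).1 i ∈ (Ideal.span {π} : Ideal V) ^ m := by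
          apply Ideal.pow_le_pow_right hmn
          rw [seq_succ]
          have : ((seq n).1 + fun i => π ^ n * w' (seq n).2 i) i - (seq n).1 i
              = π ^ n * w' (seq n).2 i := by simp
          rw [this, Ideal.span_singleton_pow, Ideal.mem_span_singleton']
          exact ⟨w' (seq n).2 i, mul_comm _ _⟩
        have := add_mem h1 ih
        rwa [sub_add_sub_cancel] at this
    have hpre : ∀ i : ι, ∃ L, ∀ n, (seq n).1 i ≡ L
        [SMOD ((Ideal.span {π} : Ideal V) ^ n • ⊤ : Submodule V V)] := by
      intro i
      apply IsPrecomplete.prec (IsAdicComplete.toIsPrecomplete (I := Ideal.span {π}) (M := V))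
      intro m n hmn
      rw [SModEq.sub_mem, smul_eq_mul, Ideal.mul_top, ← neg_sub]
      exact neg_mem (hdiff i m n hmn)
    choose L hL using hpre
    have hfinal : ∀ n : ℕ, b - ∑ i, L i • v i ∈ J ^ n := by
      intro n
      have h1 : b - ∑ i, L i • v i =
          πB ^ n * (seq n).2 + ∑ i, ((seq n).1 i - L i) • v i := by
        rw [inv n]
        simp_rw [sub_smul, Finset.sum_sub_distrib]
        ring
      rw [h1]
      apply add_mem
      · exact Ideal.mul_mem_right _ _
          (Ideal.pow_mem_pow (Ideal.mem_span_singleton_self πB) n)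
      · apply Submodule.sum_mem
        intro i _
        have hd : (seq n).1 i - L i ∈ (Ideal.span {π} : Ideal V) ^ n := by
          have := (hL i n)
          rw [SModEq.sub_mem, smul_eq_mul, Ideal.mul_top] at this
          exact this
        rw [Ideal.span_singleton_pow, Ideal.mem_span_singleton'] at hd
        obtain ⟨a, ha⟩ := hd
        rw [Algebra.smul_def, ← ha, map_mul, map_pow, ← hπB]
        rw [hJ, Ideal.span_singleton_pow]
        exact Ideal.mul_mem_right _ _
          (Ideal.mul_mem_left _ _ (Ideal.mem_span_singleton_self _))
    have hbot : b - ∑ i, L i • v i ∈ (⊥ : Ideal B) := by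
      rw [← Ideal.iInf_pow_eq_bot_of_isDomain (I := J) hne]
      exact Submodule.mem_iInf _ |>.mpr hfinal
    have hb : b = ∑ i, L i • v i := by
      exact sub_eq_zero.mp (Submodule.mem_bot B |>.mp hbot)
    rw [hb]
    exact Submodule.sum_mem _ fun i _ =>
      Submodule.smul_mem _ _ (Submodule.subset_span (Set.mem_range_self i))
  refine ⟨⟨(Finset.univ : Finset ι).image v, ?_⟩⟩
  rw [eq_top_iff]
  intro b _
  refine Submodule.span_mono ?_ (key b)
  intro x hx
  obtain ⟨i, rfl⟩ := hx
  exact Finset.mem_coe.mpr (Finset.mem_image_of_mem v (Finset.mem_univ i))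

attribute [local instance] Algebra.TensorProduct.rightAlgebra

set_option maxHeartbeats 1600000
set_option synthInstance.maxHeartbeats 1000000

/-- Let `V` be a complete DVR with fraction field `K` and algebraically
closed residue field `k`, and `B` a domain of finite type over `V` such that the
reduction of `B ⊗_V k` is isomorphic to `k` and `B ⊗_V K ≠ 0`. Then `B ⊗_V K` is a
finite field extension of `K`. -/
theorem stmt6 (V : Type) [CommRing V] [IsDomain V] [IsDiscreteValuationRing V]
    [IsAdicComplete (IsLocalRing.maximalIdeal V) V]
    [IsAlgClosed (IsLocalRing.ResidueField V)]
    (B : Type) [CommRing B] [IsDomain B] [Algebra V B]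
    (hft : Algebra.FiniteType V B)
    (hred : Nonempty
      (((IsLocalRing.ResidueField V ⊗[V] B) ⧸
          nilradical (IsLocalRing.ResidueField V ⊗[V] B)) ≃+*
        IsLocalRing.ResidueField V))
    (hK : Nontrivial (FractionRing V ⊗[V] B)) :
    IsField (FractionRing V ⊗[V] B) ∧
      Module.Finite (FractionRing V) (FractionRing V ⊗[V] B) := by
  classical
  haveI := hft
  haveI := hK
  set k := IsLocalRing.ResidueField V with hk
  set K := FractionRing V with hKdef
  haveI : IsNoetherianRing B := Algebra.FiniteType.isNoetherianRing V B
  set D := k ⊗[V] B with hD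
  obtain ⟨e⟩ := hred
  set N : Ideal D := nilradical D with hN
  -- `D ⧸ N` is a field, finite type over `k`, hence finite over `k` (Zariski)
  have hfield : IsField (D ⧸ N) := e.toMulEquiv.isField (Field.toIsField k)
  letI : Field (D ⧸ N) := hfield.toField
  haveI hFTD : Algebra.FiniteType k D := inferInstance
  haveI : Algebra.FiniteType k (D ⧸ N) :=
    Algebra.FiniteType.of_surjective (Ideal.Quotient.mkₐ k N)
      (Ideal.Quotient.mkₐ_surjective k N)
  haveI : Module.Finite k (D ⧸ N) := finite_of_finite_type_of_isJacobsonRing k (D ⧸ N)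
  haveI : Algebra.IsIntegral k (D ⧸ N) := Algebra.IsIntegral.of_finite k (D ⧸ N)
  -- hence `D` is integral over `k`, hence finite over `k`
  haveI : Algebra.IsIntegral k D := by
    constructor
    intro x
    obtain ⟨p, hp, hp0⟩ :=
      (Algebra.IsIntegral.isIntegral (R := k) ((Ideal.Quotient.mkₐ k N) x))
    have h1 : Polynomial.aeval ((Ideal.Quotient.mkₐ k N) x) p = 0 := by
      rw [Polynomial.aeval_def]; exact hp0
    have h2 : (Ideal.Quotient.mkₐ k N) (Polynomial.aeval x p) = 0 := by
      rw [← Polynomial.aeval_algHom_apply]; exact h1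
    have h3 : Polynomial.aeval x p ∈ N := by
      rwa [Ideal.Quotient.mkₐ_eq_mk, Ideal.Quotient.eq_zero_iff_mem] at h2
    rw [hN, mem_nilradical] at h3
    obtain ⟨n, hn⟩ := h3
    refine ⟨p ^ (n + 1), hp.pow _, ?_⟩
    rw [← Polynomial.aeval_def, map_pow, pow_succ, hn, zero_mul]
  haveI : Module.Finite k D := Algebra.IsIntegral.finite
  haveI : Module.Finite V k :=
    Module.Finite.of_surjective (Algebra.linearMap V k) (IsLocalRing.residue_surjective)
  haveI : Module.Finite V D := Module.Finite.trans k D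
  -- transfer to `B ⧸ J` where `J = πB`
  obtain ⟨π, hπ⟩ := IsDiscreteValuationRing.exists_irreducible V
  have hm : IsLocalRing.maximalIdeal V = Ideal.span {π} := hπ.maximalIdeal_eq
  set J : Ideal B := Ideal.span {algebraMap V B π} with hJ
  have hmap : (IsLocalRing.maximalIdeal V).map (algebraMap V B) = J := by
    rw [hm, Ideal.map_span, Set.image_singleton]
  have hle : IsLocalRing.maximalIdeal V ≤ J.comap (algebraMap V B) :=
    Ideal.map_le_iff_le_comap.mp hmap.le
  let fk : k →ₐ[V] B ⧸ J := Ideal.quotientMapₐ J (Algebra.ofId V B) hle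
  let φ : D →ₐ[V] B ⧸ J :=
    Algebra.TensorProduct.lift fk (Ideal.Quotient.mkₐ V J) (fun _ _ => Commute.all _ _)
  have hφ : Function.Surjective φ := by
    intro x
    obtain ⟨b, rfl⟩ := Ideal.Quotient.mk_surjective x
    refine ⟨(1 : k) ⊗ₜ[V] b, ?_⟩
    show Algebra.TensorProduct.lift fk (Ideal.Quotient.mkₐ V J)
      (fun _ _ => Commute.all _ _) ((1 : k) ⊗ₜ[V] b) = _
    rw [Algebra.TensorProduct.lift_tmul, map_one, one_mul]
    rfl
  haveI : Module.Finite V (B ⧸ J) := Module.Finite.of_surjective φ.toLinearMap hφ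
  -- `B ⧸ J` is nontrivial
  haveI : Nontrivial D := (Ideal.Quotient.mk N).domain_nontrivial
  have hπk : (algebraMap V k) π = 0 := by
    show (algebraMap V (IsLocalRing.ResidueField V)) π = 0
    rw [IsLocalRing.ResidueField.algebraMap_eq, IsLocalRing.residue_eq_zero_iff, hm]
    exact Ideal.mem_span_singleton_self π
  have hincl : ((1 : k) ⊗ₜ[V] (algebraMap V B π) : D) = 0 := by
    rw [show (algebraMap V B π) = π • (1 : B) from (Algebra.algebraMap_eq_smul_one π),
      TensorProduct.tmul_smul, TensorProduct.smul_tmul',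
      show (π • (1 : k)) = algebraMap V k π from (Algebra.algebraMap_eq_smul_one π).symm,
      hπk, TensorProduct.zero_tmul]
  let ψ : B ⧸ J →+* D :=
    Ideal.Quotient.lift J (Algebra.TensorProduct.includeRight.toRingHom : B →+* D)
      (by
        intro a ha
        obtain ⟨c, hc⟩ := Ideal.mem_span_singleton'.mp ha
        rw [← hc, map_mul]
        have : (Algebra.TensorProduct.includeRight.toRingHom : B →+* D)
            (algebraMap V B π) = 0 := hincl
        rw [this, mul_zero])
  haveI : Nontrivial (B ⧸ J) := ψ.domain_nontrivial
  have hne : J ≠ ⊤ := by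
    intro h
    have h1 : (Ideal.Quotient.mk J) 1 = 0 :=
      Ideal.Quotient.eq_zero_iff_mem.mpr (h ▸ Submodule.mem_top)
    simp at h1
  -- completeness: `B` is finite over `V`
  haveI : IsAdicComplete (Ideal.span {π} : Ideal V) V := by
    rw [← hm]; infer_instance
  haveI : Module.Finite V B := aux_finite_of_adicComplete V π B ‹_› hne
  -- base change to `K`
  haveI : Module.Finite K (K ⊗[V] B) := inferInstance
  -- `K ⊗[V] B` is a localization of `B`, hence a domain
  have hinj : Function.Injective (algebraMap V B) := by
    rw [injective_iff_map_eq_zero]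
    intro v hv
    by_contra h0
    have h1 : algebraMap V (K ⊗[V] B) v = 0 := by
      rw [IsScalarTower.algebraMap_apply V B (K ⊗[V] B), hv, map_zero]
    rw [IsScalarTower.algebraMap_apply V K (K ⊗[V] B)] at h1
    have h2 : algebraMap V K v = 0 := (RingHom.injective (algebraMap K (K ⊗[V] B)))
      (by rw [h1, map_zero])
    exact h0 (IsFractionRing.injective V K (by rw [h2, map_zero]))
  haveI : IsLocalizedModule (nonZeroDivisors V)
      (IsScalarTower.toAlgHom V B (K ⊗[V] B)).toLinearMap := by
    rw [isLocalizedModule_iff_isBaseChange (S := nonZeroDivisors V) (A := K)]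
    exact TensorProduct.isBaseChange V B K
  haveI : IsLocalization (Algebra.algebraMapSubmonoid B (nonZeroDivisors V)) (K ⊗[V] B) :=
    isLocalizedModule_iff_isLocalization.mp inferInstance
  have hMle : Algebra.algebraMapSubmonoid B (nonZeroDivisors V) ≤ nonZeroDivisors B := by
    rintro _ ⟨v, hv, rfl⟩
    refine mem_nonZeroDivisors_of_ne_zero ?_
    intro h0
    exact mem_nonZeroDivisors_iff_ne_zero.mp hv (hinj (by rw [h0, map_zero]))
  haveI : IsDomain (K ⊗[V] B) := IsLocalization.isDomain_of_le_nonZeroDivisors (K ⊗[V] B) hMle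
  have hIsField : IsField (K ⊗[V] B) :=
    (Algebra.IsIntegral.isField_iff_isField
      (RingHom.injective (algebraMap K (K ⊗[V] B)))).mp (Field.toIsField K)
  exact ⟨hIsField, inferInstance⟩
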